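/- Let ω ⊆ ℝ² be open and let ψ_A, ψ_B : ℝ² → ℝ³ be twice continuously differentiable on ω with (∇ψ_B(y))ᵀ∇ψ_B(y) = (∇ψ_A(y))ᵀ∇ψ_A(y) for all y ∈ ω. Let x ∈ ω be such that ∂₁ψ_A(x), ∂₂ψ_A(x) are linearly independent. Then for all j, k ∈ {1,2}: ∂ₖ∂ⱼψ_B(x) = (∂ₖ∂ⱼψ_B(x)·n[ψ_B](x)) n[ψ_B](x) + (∂ₖ∂ⱼψ_A(x)·y¹[ψ_A](x)) y¹[ψ_B](x) + (∂ₖ∂ⱼψ_A(x)·y²[ψ_A](x)) y²[ψ_B](x). -/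

import Mathlib

open Matrix MeasureTheory

noncomputable section

/-- `i`-th partial derivative of `ψ : ℝ² → ℝ³` at `x`. -/
def pd (ψ : (Fin 2 → ℝ) → (Fin 3 → ℝ)) (i : Fin 2) (x : Fin 2 → ℝ) : Fin 3 → ℝ :=
  fderiv ℝ ψ x (Pi.single i 1)

/-- Jacobian matrix `∇ψ(x) ∈ ℝ^{3×2}`. -/
def jac (ψ : (Fin 2 → ℝ) → (Fin 3 → ℝ)) (x : Fin 2 → ℝ) : Matrix (Fin 3) (Fin 2) ℝ :=
  Matrix.of fun m i => pd ψ i x m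

/-- First fundamental form `g[ψ](x) = (∇ψ(x))ᵀ ∇ψ(x)`. -/
def met (ψ : (Fin 2 → ℝ) → (Fin 3 → ℝ)) (x : Fin 2 → ℝ) : Matrix (Fin 2) (Fin 2) ℝ :=
  (jac ψ x)ᵀ * jac ψ x

/-- Euclidean inner product on `ℝ³`. -/
def dot3 (u v : Fin 3 → ℝ) : ℝ := ∑ m, u m * v m

/-- Euclidean norm on `ℝ³`. -/
def norm3 (u : Fin 3 → ℝ) : ℝ := Real.sqrt (dot3 u u)

/-- Cross product `∂₁ψ(x) × ∂₂ψ(x)`. -/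
def crossPsi (ψ : (Fin 2 → ℝ) → (Fin 3 → ℝ)) (x : Fin 2 → ℝ) : Fin 3 → ℝ :=
  crossProduct (pd ψ 0 x) (pd ψ 1 x)

/-- Unit normal `n[ψ](x)`. -/
def nrm (ψ : (Fin 2 → ℝ) → (Fin 3 → ℝ)) (x : Fin 2 → ℝ) : Fin 3 → ℝ :=
  (norm3 (crossPsi ψ x))⁻¹ • crossPsi ψ x

/-- Second partial derivative `∂ᵢ∂ⱼψ(x)`. -/
def pd2 (ψ : (Fin 2 → ℝ) → (Fin 3 → ℝ)) (i j : Fin 2) (x : Fin 2 → ℝ) : Fin 3 → ℝ :=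
  pd (pd ψ j) i x

/-- Hessian `D²ψᵐ(x)` of the `m`-th component. -/
def hess (ψ : (Fin 2 → ℝ) → (Fin 3 → ℝ)) (m : Fin 3) (x : Fin 2 → ℝ) :
    Matrix (Fin 2) (Fin 2) ℝ :=
  Matrix.of fun i j => pd2 ψ i j x m

/-- Second fundamental form `II[ψ](x)ᵢⱼ = ∂ᵢ∂ⱼψ(x)·n[ψ](x)`. -/
def sff (ψ : (Fin 2 → ℝ) → (Fin 3 → ℝ)) (x : Fin 2 → ℝ) : Matrix (Fin 2) (Fin 2) ℝ :=
  Matrix.of fun i j => dot3 (pd2 ψ i j x) (nrm ψ x)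

/-- Frobenius inner product `A : B`. -/
def frob {n : Type*} [Fintype n] (A B : Matrix n n ℝ) : ℝ := ∑ i, ∑ j, A i j * B i j

/-- Gram–Schmidt frame vector `y¹[ψ](x)`. -/
def y1 (ψ : (Fin 2 → ℝ) → (Fin 3 → ℝ)) (x : Fin 2 → ℝ) : Fin 3 → ℝ :=
  (norm3 (pd ψ 0 x))⁻¹ • pd ψ 0 x

/-- Gram–Schmidt vector `ŷ²[ψ](x)` (before normalization). -/
def yhat2 (ψ : (Fin 2 → ℝ) → (Fin 3 → ℝ)) (x : Fin 2 → ℝ) : Fin 3 → ℝ :=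
  pd ψ 1 x - (dot3 (pd ψ 1 x) (y1 ψ x)) • y1 ψ x

/-- Gram–Schmidt frame vector `y²[ψ](x)`. -/
def y2 (ψ : (Fin 2 → ℝ) → (Fin 3 → ℝ)) (x : Fin 2 → ℝ) : Fin 3 → ℝ :=
  (norm3 (yhat2 ψ x))⁻¹ • yhat2 ψ x

/-! ### Auxiliary algebraic lemmas -/

section AuxAlg

lemma aux_dot3_smul_right (u v : Fin 3 → ℝ) (c : ℝ) : dot3 u (c • v) = c * dot3 u v := by
  simp only [dot3, Fin.sum_univ_three, Pi.smul_apply, smul_eq_mul]; ring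

lemma aux_dot3_smul_left (u v : Fin 3 → ℝ) (c : ℝ) : dot3 (c • u) v = c * dot3 u v := by
  simp only [dot3, Fin.sum_univ_three, Pi.smul_apply, smul_eq_mul]; ring

lemma aux_dot3_sub_right (u v w : Fin 3 → ℝ) : dot3 u (v - w) = dot3 u v - dot3 u w := by
  simp only [dot3, Fin.sum_univ_three, Pi.sub_apply]; ring

lemma aux_dot3_comm (u v : Fin 3 → ℝ) : dot3 u v = dot3 v u := by
  simp only [dot3, Fin.sum_univ_three]; ring

lemma aux_dot3_nonneg (u : Fin 3 → ℝ) : 0 ≤ dot3 u u := by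
  simp only [dot3, Fin.sum_univ_three]
  nlinarith [mul_self_nonneg (u 0), mul_self_nonneg (u 1), mul_self_nonneg (u 2)]

lemma aux_norm3_sq (u : Fin 3 → ℝ) : norm3 u * norm3 u = dot3 u u :=
  Real.mul_self_sqrt (aux_dot3_nonneg u)

lemma aux_inv_norm3_sq (u : Fin 3 → ℝ) : (norm3 u)⁻¹ * (norm3 u)⁻¹ = (dot3 u u)⁻¹ := by
  rw [← mul_inv, aux_norm3_sq]

lemma aux_lagrange (a b : Fin 3 → ℝ) :
    dot3 (crossProduct a b) (crossProduct a b) = dot3 a a * dot3 b b - dot3 a b * dot3 a b := by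
  simp only [dot3, cross_apply, Fin.sum_univ_three, Matrix.cons_val_zero, Matrix.cons_val_one,
    Matrix.head_cons, Matrix.cons_val_two, Matrix.tail_cons]
  ring

lemma aux_key (a b w : Fin 3 → ℝ) (m : Fin 3) :
    dot3 a a * dot3 (crossProduct a b) (crossProduct a b) * w m
      = dot3 a a * dot3 w (crossProduct a b) * crossProduct a b m
        + dot3 (crossProduct a b) (crossProduct a b) * dot3 w a * a m
        + dot3 w (dot3 a a • b - dot3 b a • a) * (dot3 a a • b - dot3 b a • a) m := by
  fin_cases m <;>
  · simp only [dot3, cross_apply, Fin.sum_univ_three, Pi.sub_apply, Pi.smul_apply, smul_eq_mul,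
      Fin.zero_eta, Fin.mk_one, Fin.isValue, Matrix.cons_val_zero, Matrix.cons_val_one,
      Matrix.head_cons, Matrix.cons_val_two, Matrix.tail_cons, Fin.reduceFinMk]
    ring

lemma aux_zz_eq (a b : Fin 3 → ℝ) :
    dot3 (dot3 a a • b - dot3 b a • a) (dot3 a a • b - dot3 b a • a)
      = dot3 a a * dot3 (crossProduct a b) (crossProduct a b) := by
  simp only [dot3, cross_apply, Fin.sum_univ_three, Pi.sub_apply, Pi.smul_apply, smul_eq_mul,
    Matrix.cons_val_zero, Matrix.cons_val_one, Matrix.head_cons, Matrix.cons_val_two,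
    Matrix.tail_cons]
  ring

lemma aux_dot3_self_eq_zero {u : Fin 3 → ℝ} (h : dot3 u u = 0) : u = 0 := by
  simp only [dot3, Fin.sum_univ_three] at h
  funext m
  fin_cases m <;>
  · simp only [Fin.zero_eta, Fin.mk_one, Fin.reduceFinMk, Pi.zero_apply, Fin.isValue]
    nlinarith [mul_self_nonneg (u 0), mul_self_nonneg (u 1), mul_self_nonneg (u 2)]

lemma aux_cross_ne (v1 v2 : Fin 3 → ℝ) (hli : LinearIndependent ℝ ![v1, v2]) :
    dot3 (crossProduct v1 v2) (crossProduct v1 v2) ≠ 0 := by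
  intro h
  have hz : dot3 (dot3 v1 v1 • v2 - dot3 v2 v1 • v1) (dot3 v1 v1 • v2 - dot3 v2 v1 • v1) = 0 := by
    rw [aux_zz_eq, h, mul_zero]
  have hZ0 : dot3 v1 v1 • v2 - dot3 v2 v1 • v1 = 0 := aux_dot3_self_eq_zero hz
  have hv1 : v1 ≠ 0 := by
    have := hli.ne_zero 0
    simpa using this
  have hp : dot3 v1 v1 ≠ 0 := fun h' => hv1 (aux_dot3_self_eq_zero h')
  have hcomb : dot3 v2 v1 • v1 + (-(dot3 v1 v1)) • v2 = 0 := by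
    rw [neg_smul, ← sub_eq_add_neg, ← neg_sub, hZ0, neg_zero]
  obtain ⟨-, h2⟩ := LinearIndependent.pair_iff.mp hli _ _ hcomb
  exact hp (neg_eq_zero.mp h2)

lemma aux_clean (a b w : Fin 3 → ℝ)
    (hc : dot3 (crossProduct a b) (crossProduct a b) ≠ 0) :
    w = ((dot3 (crossProduct a b) (crossProduct a b))⁻¹ * dot3 w (crossProduct a b)) • crossProduct a b
      + ((dot3 a a)⁻¹ * dot3 w a) • a
      + ((dot3 (b - ((dot3 a a)⁻¹ * dot3 b a) • a) (b - ((dot3 a a)⁻¹ * dot3 b a) • a))⁻¹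
          * dot3 w (b - ((dot3 a a)⁻¹ * dot3 b a) • a)) • (b - ((dot3 a a)⁻¹ * dot3 b a) • a) := by
  have hp : dot3 a a ≠ 0 := by
    intro h
    apply hc
    rw [aux_lagrange, h, aux_dot3_self_eq_zero h]
    simp [dot3]
  set C := dot3 (crossProduct a b) (crossProduct a b) with hC
  set Z : Fin 3 → ℝ := dot3 a a • b - dot3 b a • a with hZ
  have hY : b - ((dot3 a a)⁻¹ * dot3 b a) • a = (dot3 a a)⁻¹ • Z := by
    rw [hZ, smul_sub, smul_smul, smul_smul, inv_mul_cancel₀ hp, one_smul, mul_comm]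
  rw [hY]
  have hZZ : dot3 Z Z = dot3 a a * C := aux_zz_eq a b
  simp only [aux_dot3_smul_right, aux_dot3_smul_left]
  rw [hZZ]
  funext m
  have hk := aux_key a b w m
  simp only [Pi.add_apply, Pi.smul_apply, smul_eq_mul]
  field_simp
  linear_combination hk

lemma aux_alg (u1 u2 v1 v2 w wA : Fin 3 → ℝ)
    (h00 : dot3 u1 u1 = dot3 v1 v1) (h10 : dot3 u2 u1 = dot3 v2 v1)
    (h11 : dot3 u2 u2 = dot3 v2 v2)
    (hw1 : dot3 w u1 = dot3 wA v1) (hw2 : dot3 w u2 = dot3 wA v2)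
    (hcA : dot3 (crossProduct v1 v2) (crossProduct v1 v2) ≠ 0) :
    w = (dot3 w ((norm3 (crossProduct u1 u2))⁻¹ • crossProduct u1 u2))
          • ((norm3 (crossProduct u1 u2))⁻¹ • crossProduct u1 u2)
      + (dot3 wA ((norm3 v1)⁻¹ • v1)) • ((norm3 u1)⁻¹ • u1)
      + (dot3 wA ((norm3 (v2 - dot3 v2 ((norm3 v1)⁻¹ • v1) • ((norm3 v1)⁻¹ • v1)))⁻¹
            • (v2 - dot3 v2 ((norm3 v1)⁻¹ • v1) • ((norm3 v1)⁻¹ • v1))))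
          • ((norm3 (u2 - dot3 u2 ((norm3 u1)⁻¹ • u1) • ((norm3 u1)⁻¹ • u1)))⁻¹
            • (u2 - dot3 u2 ((norm3 u1)⁻¹ • u1) • ((norm3 u1)⁻¹ • u1))) := by
  have hgs : ∀ z1 z2 : Fin 3 → ℝ, z2 - dot3 z2 ((norm3 z1)⁻¹ • z1) • ((norm3 z1)⁻¹ • z1)
      = z2 - ((dot3 z1 z1)⁻¹ * dot3 z2 z1) • z1 := by
    intro z1 z2
    rw [aux_dot3_smul_right, smul_smul, show (norm3 z1)⁻¹ * dot3 z2 z1 * (norm3 z1)⁻¹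
      = (dot3 z1 z1)⁻¹ * dot3 z2 z1 by rw [← aux_inv_norm3_sq z1]; ring]
  rw [hgs, hgs]
  set YB : Fin 3 → ℝ := u2 - ((dot3 u1 u1)⁻¹ * dot3 u2 u1) • u1 with hYB
  set YA : Fin 3 → ℝ := v2 - ((dot3 v1 v1)⁻¹ * dot3 v2 v1) • v1 with hYA
  have hcB : dot3 (crossProduct u1 u2) (crossProduct u1 u2) ≠ 0 := by
    rw [aux_lagrange, h00, h11, aux_dot3_comm u1 u2, h10, aux_dot3_comm v2 v1, ← aux_lagrange]
    exact hcA
  have hwY : dot3 w YB = dot3 wA YA := by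
    rw [hYB, hYA, aux_dot3_sub_right, aux_dot3_sub_right, aux_dot3_smul_right,
      aux_dot3_smul_right, hw1, hw2, h00, h10]
  have hYY : dot3 YB YB = dot3 YA YA := by
    have e1 : ∀ (z1 z2 : Fin 3 → ℝ), dot3 (z2 - ((dot3 z1 z1)⁻¹ * dot3 z2 z1) • z1)
        (z2 - ((dot3 z1 z1)⁻¹ * dot3 z2 z1) • z1)
        = dot3 z2 z2 - 2 * ((dot3 z1 z1)⁻¹ * dot3 z2 z1) * dot3 z2 z1
          + ((dot3 z1 z1)⁻¹ * dot3 z2 z1)^2 * dot3 z1 z1 := by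
      intro z1 z2
      simp only [dot3, Fin.sum_univ_three, Pi.sub_apply, Pi.smul_apply, smul_eq_mul]
      ring
    rw [hYB, hYA, e1, e1, h00, h10, h11]
  have hn1 : norm3 v1 = norm3 u1 := by rw [norm3, norm3, h00]
  have hnY : norm3 YA = norm3 YB := by rw [norm3, norm3, hYY]
  rw [hn1, hnY]
  simp only [aux_dot3_smul_right]
  rw [← hw1, ← hwY]
  have hterm : ∀ (z : Fin 3 → ℝ) (t : ℝ), ((norm3 z)⁻¹ * t) • ((norm3 z)⁻¹ • z)
      = ((dot3 z z)⁻¹ * t) • z := by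
    intro z t
    rw [smul_smul, show (norm3 z)⁻¹ * t * (norm3 z)⁻¹ = (dot3 z z)⁻¹ * t by
      rw [← aux_inv_norm3_sq z]; ring]
  rw [hterm, hterm, hterm]
  exact aux_clean u1 u2 w hcB

end AuxAlg

/-! ### Auxiliary analytic lemmas -/

section AuxAnal

lemma aux_met_apply (ψ : (Fin 2 → ℝ) → (Fin 3 → ℝ)) (x : Fin 2 → ℝ) (i j : Fin 2) :
    met ψ x i j = dot3 (pd ψ i x) (pd ψ j x) := by
  simp [met, jac, Matrix.mul_apply, Matrix.transpose_apply, dot3]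

variable {ω : Set (Fin 2 → ℝ)} {ψ : (Fin 2 → ℝ) → Fin 3 → ℝ} {x : Fin 2 → ℝ}

lemma aux_pd_hasFDerivAt (hω : IsOpen ω) (hψ : ContDiffOn ℝ 2 ψ ω) (hx : x ∈ ω) (i : Fin 2) :
    HasFDerivAt (pd ψ i)
      ((ContinuousLinearMap.apply ℝ (Fin 3 → ℝ) (Pi.single i 1)).comp
        (fderiv ℝ (fderiv ℝ ψ) x)) x := by
  have h1 : ContDiffAt ℝ 2 ψ x := hψ.contDiffAt (hω.mem_nhds hx)
  have h2 : ContDiffAt ℝ 1 (fderiv ℝ ψ) x := h1.fderiv_right (le_refl 2)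
  have h3 : DifferentiableAt ℝ (fderiv ℝ ψ) x := h2.differentiableAt one_ne_zero
  exact ((ContinuousLinearMap.apply ℝ (Fin 3 → ℝ) (Pi.single i 1)).hasFDerivAt).comp x
    h3.hasFDerivAt

lemma aux_pd2_eq (hω : IsOpen ω) (hψ : ContDiffOn ℝ 2 ψ ω) (hx : x ∈ ω) (k i : Fin 2) :
    pd2 ψ k i x = fderiv ℝ (fderiv ℝ ψ) x (Pi.single k 1) (Pi.single i 1) := by
  have h := (aux_pd_hasFDerivAt hω hψ hx i).fderiv
  show fderiv ℝ (pd ψ i) x (Pi.single k 1) = _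
  rw [h]
  rfl

lemma aux_pd2_symm (hω : IsOpen ω) (hψ : ContDiffOn ℝ 2 ψ ω) (hx : x ∈ ω) (k i : Fin 2) :
    pd2 ψ k i x = pd2 ψ i k x := by
  rw [aux_pd2_eq hω hψ hx, aux_pd2_eq hω hψ hx]
  exact (hψ.contDiffAt (hω.mem_nhds hx)).isSymmSndFDerivAt (by norm_num) _ _

lemma aux_metder (hω : IsOpen ω) (hψ : ContDiffOn ℝ 2 ψ ω) (hx : x ∈ ω) (i j : Fin 2) :
    HasFDerivAt (fun y => dot3 (pd ψ i y) (pd ψ j y))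
      (∑ m : Fin 3,
        (pd ψ i x m • ((ContinuousLinearMap.proj m).comp
            ((ContinuousLinearMap.apply ℝ (Fin 3 → ℝ) (Pi.single j 1)).comp
              (fderiv ℝ (fderiv ℝ ψ) x)))
          + pd ψ j x m • ((ContinuousLinearMap.proj m).comp
            ((ContinuousLinearMap.apply ℝ (Fin 3 → ℝ) (Pi.single i 1)).comp
              (fderiv ℝ (fderiv ℝ ψ) x))))) x := by
  have hi := aux_pd_hasFDerivAt hω hψ hx i
  have hj := aux_pd_hasFDerivAt hω hψ hx j
  have hm : ∀ m : Fin 3, HasFDerivAt (fun y => pd ψ i y m * pd ψ j y m)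
      (pd ψ i x m • ((ContinuousLinearMap.proj m).comp
          ((ContinuousLinearMap.apply ℝ (Fin 3 → ℝ) (Pi.single j 1)).comp
            (fderiv ℝ (fderiv ℝ ψ) x)))
        + pd ψ j x m • ((ContinuousLinearMap.proj m).comp
          ((ContinuousLinearMap.apply ℝ (Fin 3 → ℝ) (Pi.single i 1)).comp
            (fderiv ℝ (fderiv ℝ ψ) x)))) x := by
    intro m
    exact HasFDerivAt.mul
      (((ContinuousLinearMap.proj (R := ℝ) (φ := fun _ : Fin 3 => ℝ) m).hasFDerivAt).comp x hi)
      (((ContinuousLinearMap.proj (R := ℝ) (φ := fun _ : Fin 3 => ℝ) m).hasFDerivAt).comp x hj)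
  exact HasFDerivAt.fun_sum (fun m _ => hm m)

end AuxAnal

/-- Under the metric constraint, the second derivatives of
`ψ_B` decompose in the frame `{n[ψ_B], y¹[ψ_B], y²[ψ_B]}` with tangential
coefficients computed from `ψ_A`. -/
theorem second_deriv_decomposition
    (ω : Set (Fin 2 → ℝ)) (hω : IsOpen ω)
    (ψA ψB : (Fin 2 → ℝ) → (Fin 3 → ℝ))
    (hA : ContDiffOn ℝ 2 ψA ω) (hB : ContDiffOn ℝ 2 ψB ω)
    (hmet : ∀ y ∈ ω, met ψB y = met ψA y)
    (x : Fin 2 → ℝ) (hx : x ∈ ω)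
    (hli : LinearIndependent ℝ ![pd ψA 0 x, pd ψA 1 x]) :
    ∀ j k : Fin 2,
      pd2 ψB k j x
        = (dot3 (pd2 ψB k j x) (nrm ψB x)) • nrm ψB x
          + (dot3 (pd2 ψA k j x) (y1 ψA x)) • y1 ψB x
          + (dot3 (pd2 ψA k j x) (y2 ψA x)) • y2 ψB x := by
  intro j k
  have hGram : ∀ a b : Fin 2, dot3 (pd ψB a x) (pd ψB b x) = dot3 (pd ψA a x) (pd ψA b x) := by
    intro a b
    rw [← aux_met_apply, ← aux_met_apply, hmet x hx]
  have sumEq : ∀ a b c : Fin 2,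
      dot3 (pd2 ψB a b x) (pd ψB c x) + dot3 (pd2 ψB a c x) (pd ψB b x)
        = dot3 (pd2 ψA a b x) (pd ψA c x) + dot3 (pd2 ψA a c x) (pd ψA b x) := by
    intro a b c
    have hBd := aux_metder hω hB hx b c
    have hAd := aux_metder hω hA hx b c
    have heq : (fun y => dot3 (pd ψA b y) (pd ψA c y))
        =ᶠ[nhds x] fun y => dot3 (pd ψB b y) (pd ψB c y) := by
      filter_upwards [hω.mem_nhds hx] with y hy
      rw [← aux_met_apply, ← aux_met_apply, hmet y hy]
    have hEqD := (hBd.congr_of_eventuallyEq heq).unique hAd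
    have h2 := congrArg (fun L => L (Pi.single a 1)) hEqD
    simp only [ContinuousLinearMap.coe_sum', Finset.sum_apply, ContinuousLinearMap.add_apply,
      ContinuousLinearMap.coe_smul', Pi.smul_apply, ContinuousLinearMap.coe_comp',
      Function.comp_apply, ContinuousLinearMap.proj_apply, ContinuousLinearMap.apply_apply,
      smul_eq_mul, ContinuousLinearMap.sum_apply, ContinuousLinearMap.smul_apply,
      ContinuousLinearMap.comp_apply] at h2
    simp only [← aux_pd2_eq hω hB hx, ← aux_pd2_eq hω hA hx] at h2
    simp only [dot3, Fin.sum_univ_three] at h2 ⊢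
    linarith [h2]
  have eB : ∀ a b c : Fin 2, dot3 (pd2 ψB a b x) (pd ψB c x) = dot3 (pd2 ψB b a x) (pd ψB c x) :=
    fun a b c => by rw [aux_pd2_symm hω hB hx a b]
  have eA : ∀ a b c : Fin 2, dot3 (pd2 ψA a b x) (pd ψA c x) = dot3 (pd2 ψA b a x) (pd ψA c x) :=
    fun a b c => by rw [aux_pd2_symm hω hA hx a b]
  have hKey : ∀ c : Fin 2, dot3 (pd2 ψB k j x) (pd ψB c x) = dot3 (pd2 ψA k j x) (pd ψA c x) := by
    intro c
    linarith [sumEq k j c, sumEq j k c, sumEq c k j, eB j k c, eB j c k, eB c k j,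
      eA j k c, eA j c k, eA c k j]
  have hcA := aux_cross_ne _ _ hli
  simp only [nrm, crossPsi, y1, y2, yhat2]
  exact aux_alg (pd ψB 0 x) (pd ψB 1 x) (pd ψA 0 x) (pd ψA 1 x)
    (pd2 ψB k j x) (pd2 ψA k j x)
    (hGram 0 0) (hGram 1 0) (hGram 1 1) (hKey 0) (hKey 1) hcA

end
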